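/- Let ψ : ℝ → ℝ be three times differentiable with ψ'(φ) > 0, a > 0, R(φ) = a/(1+ψ'(φ)) and Ξ_P(φ) = −R(φ)·exp(i·ψ(φ)). Then |Ξ_P'(φ)| = a·w(φ)/(1+ψ'(φ))² with w(φ) = sqrt(ψ''(φ)² + ψ'(φ)²·(1+ψ'(φ))²); in particular the two centrodes X_P(φ) = (a·ψ'(φ)/(1+ψ'(φ)))·exp(−iφ) and Ξ_P have derivatives of equal modulus at every φ. -/

import Mathlib

open Complex

theorem abs_deriv_centrode_driven
    (ψ ψ' ψ'' ψ''' : ℝ → ℝ) (a : ℝ) (ha : 0 < a)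
    (hd1 : ∀ t, HasDerivAt ψ (ψ' t) t)
    (hd2 : ∀ t, HasDerivAt ψ' (ψ'' t) t)
    (hd3 : ∀ t, HasDerivAt ψ'' (ψ''' t) t)
    (hpos : ∀ t, 0 < ψ' t)
    (R : ℝ → ℝ) (hR : ∀ t, R t = a / (1 + ψ' t))
    (Ξ_P : ℝ → ℂ)
    (hΞ : ∀ t, Ξ_P t = -(R t : ℂ) * Complex.exp ((ψ t : ℂ) * Complex.I))
    (X_P : ℝ → ℂ)
    (hX : ∀ t, X_P t =
      ((a * ψ' t / (1 + ψ' t) : ℝ) : ℂ) * Complex.exp (-(t : ℂ) * Complex.I))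
    (w : ℝ → ℝ)
    (hw : ∀ t, w t = Real.sqrt ((ψ'' t) ^ 2 + (ψ' t) ^ 2 * (1 + ψ' t) ^ 2))
    (φ : ℝ) :
    ‖deriv Ξ_P φ‖ = a * w φ / (1 + ψ' φ) ^ 2 ∧
    ‖deriv X_P φ‖ = ‖deriv Ξ_P φ‖ := by
  have hspos : ∀ t, (0:ℝ) < 1 + ψ' t := fun t => by have := hpos t; linarith
  have hs0 : (1 + ψ' φ) ≠ 0 := ne_of_gt (hspos φ)
  -- derivative of R
  have hRfun : R = fun t => a / (1 + ψ' t) := funext hR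
  have hR' : HasDerivAt R (-(a * ψ'' φ) / (1 + ψ' φ) ^ 2) φ := by
    rw [hRfun]
    have h := (hasDerivAt_const φ a).div ((hasDerivAt_const φ (1:ℝ)).add (hd2 φ)) hs0
    refine h.congr_deriv ?_
    simp only [Pi.add_apply]
    ring
  -- derivative of the exponential factor for Ξ_P
  have hE : HasDerivAt (fun t : ℝ => Complex.exp ((ψ t : ℂ) * Complex.I))
      (Complex.exp ((ψ φ : ℂ) * Complex.I) * ((ψ' φ : ℂ) * Complex.I)) φ :=
    (((hd1 φ).ofReal_comp).mul_const Complex.I).cexp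
  have hΞfun : Ξ_P = fun t => -(R t : ℂ) * Complex.exp ((ψ t : ℂ) * Complex.I) := funext hΞ
  have hΞd : HasDerivAt Ξ_P
      (-((-(a * ψ'' φ) / (1 + ψ' φ) ^ 2 : ℝ) : ℂ) * Complex.exp ((ψ φ : ℂ) * Complex.I)
        + -(R φ : ℂ) *
          (Complex.exp ((ψ φ : ℂ) * Complex.I) * ((ψ' φ : ℂ) * Complex.I))) φ := by
    rw [hΞfun]
    exact ((hR'.ofReal_comp).neg).mul hE
  have hDΞ : deriv Ξ_P φ =
      (((a * ψ'' φ / (1 + ψ' φ) ^ 2 : ℝ) : ℂ) + ((-(R φ * ψ' φ) : ℝ) : ℂ) * Complex.I) *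
        Complex.exp ((ψ φ : ℂ) * Complex.I) := by
    rw [hΞd.deriv]
    push_cast
    ring
  have habsΞ : ‖deriv Ξ_P φ‖ =
      Real.sqrt ((a * ψ'' φ / (1 + ψ' φ) ^ 2) ^ 2 + (a * ψ' φ / (1 + ψ' φ)) ^ 2) := by
    rw [hDΞ, norm_mul, Complex.norm_exp_ofReal_mul_I, mul_one, Complex.norm_add_mul_I]
    congr 1
    rw [hR]
    ring
  -- key algebraic identity
  have key : Real.sqrt ((a * ψ'' φ / (1 + ψ' φ) ^ 2) ^ 2 + (a * ψ' φ / (1 + ψ' φ)) ^ 2)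
      = a * w φ / (1 + ψ' φ) ^ 2 := by
    rw [hw]
    rw [show (a * ψ'' φ / (1 + ψ' φ) ^ 2) ^ 2 + (a * ψ' φ / (1 + ψ' φ)) ^ 2
        = (a / (1 + ψ' φ) ^ 2) ^ 2 * ((ψ'' φ) ^ 2 + (ψ' φ) ^ 2 * (1 + ψ' φ) ^ 2) by
      field_simp]
    rw [Real.sqrt_mul (sq_nonneg _), Real.sqrt_sq (by positivity)]
    ring
  -- derivative of X_P
  have hf' : HasDerivAt (fun t => a * ψ' t / (1 + ψ' t)) (a * ψ'' φ / (1 + ψ' φ) ^ 2) φ := by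
    have h := ((hd2 φ).const_mul a).div ((hasDerivAt_const φ (1:ℝ)).add (hd2 φ)) hs0
    refine h.congr_deriv ?_
    simp only [Pi.add_apply]
    field_simp
    ring
  have hE2 : HasDerivAt (fun t : ℝ => Complex.exp (-(t : ℂ) * Complex.I))
      (Complex.exp (-(φ : ℂ) * Complex.I) * (-1 * Complex.I)) φ :=
    ((((hasDerivAt_id φ).ofReal_comp).neg).mul_const Complex.I).cexp
  have hXfun : X_P = fun t =>
      ((a * ψ' t / (1 + ψ' t) : ℝ) : ℂ) * Complex.exp (-(t : ℂ) * Complex.I) := funext hX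
  have hXd : HasDerivAt X_P
      (((a * ψ'' φ / (1 + ψ' φ) ^ 2 : ℝ) : ℂ) * Complex.exp (-(φ : ℂ) * Complex.I)
        + ((a * ψ' φ / (1 + ψ' φ) : ℝ) : ℂ) *
          (Complex.exp (-(φ : ℂ) * Complex.I) * (-1 * Complex.I))) φ := by
    rw [hXfun]
    exact (hf'.ofReal_comp).mul hE2
  have hDX : deriv X_P φ =
      (((a * ψ'' φ / (1 + ψ' φ) ^ 2 : ℝ) : ℂ) + ((-(a * ψ' φ / (1 + ψ' φ)) : ℝ) : ℂ) * Complex.I)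
        * Complex.exp (-(φ : ℂ) * Complex.I) := by
    rw [hXd.deriv]
    push_cast
    ring
  have habsX : ‖deriv X_P φ‖ =
      Real.sqrt ((a * ψ'' φ / (1 + ψ' φ) ^ 2) ^ 2 + (a * ψ' φ / (1 + ψ' φ)) ^ 2) := by
    rw [hDX, norm_mul,
      show -(φ : ℂ) * Complex.I = ((-φ : ℝ) : ℂ) * Complex.I by push_cast; ring,
      Complex.norm_exp_ofReal_mul_I, mul_one, Complex.norm_add_mul_I]
    congr 1
    ring
  exact ⟨habsΞ.trans key, by rw [habsX, habsΞ]⟩
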